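/- Let (X,d) be a complete metric space and T : X → X a mapping such that d(Tx, Ty) ≤ β(d(x,y))·d(x,y) for all x,y ∈ X, where β : [0,∞) → [0,1) satisfies: whenever lim β(tₙ) = 1, then lim tₙ = 0. Then T has a unique fixed point u ∈ X, and for every x ∈ X the Picard iterates Tⁿx converge to u. -/

import Mathlib

open Filter Topology

def IsGeraghty (β : ℝ → ℝ) : Prop :=
  (∀ t : ℝ, 0 ≤ t → 0 ≤ β t ∧ β t < 1) ∧
  (∀ t : ℕ → ℝ, (∀ n, 0 ≤ t n) →
    Filter.Tendsto (fun n => β (t n)) Filter.atTop (nhds 1) →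
    Filter.Tendsto t Filter.atTop (nhds 0))

lemma geraghty_unif (β : ℝ → ℝ) (hβ : IsGeraghty β) {ε : ℝ} (hε : 0 < ε) :
    ∃ q : ℝ, 0 ≤ q ∧ q < 1 ∧ ∀ t, ε ≤ t → β t ≤ q := by
  by_contra h
  push_neg at h
  have hsel : ∀ n : ℕ, ∃ t, ε ≤ t ∧ max (0:ℝ) (1 - 1/((n:ℝ)+1)) < β t := by
    intro n
    apply h
    · exact le_max_left _ _
    · apply max_lt one_pos
      have : (0:ℝ) < 1/((n:ℝ)+1) := by positivity
      linarith
  choose t ht hb using hsel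
  have htnn : ∀ n, 0 ≤ t n := fun n => le_trans hε.le (ht n)
  have hβt : Tendsto (fun n => β (t n)) atTop (𝓝 1) := by
    have hlo : Tendsto (fun n : ℕ => 1 - 1/((n:ℝ)+1)) atTop (𝓝 1) := by
      have : Tendsto (fun n : ℕ => 1 / ((n:ℝ) + 1)) atTop (𝓝 0) := tendsto_one_div_add_atTop_nhds_zero_nat
      simpa using this.const_sub 1
    refine tendsto_of_tendsto_of_tendsto_of_le_of_le hlo tendsto_const_nhds
      (fun n => ?_) (fun n => ?_)
    · exact le_of_lt (lt_of_le_of_lt (le_max_right _ _) (hb n))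
    · exact ((hβ.1 (t n) (htnn n)).2).le
  have hto0 := hβ.2 t htnn hβt
  have hε0 : ε ≤ 0 := ge_of_tendsto hto0 (Eventually.of_forall ht)
  linarith

lemma geraghty_orbit {X : Type*} [MetricSpace X] [CompleteSpace X]
    (β : ℝ → ℝ) (hβ : IsGeraghty β) (T : X → X)
    (hT : ∀ x y : X, dist (T x) (T y) ≤ β (dist x y) * dist x y) (x : X) :
    ∃ u : X, T u = u ∧ Tendsto (fun n => T^[n] x) atTop (𝓝 u) := by
  set s : ℕ → X := fun n => T^[n] x with hs
  have hsucc : ∀ n, s (n+1) = T (s n) := fun n => Function.iterate_succ_apply' T n x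
  set d : ℕ → ℝ := fun n => dist (s n) (s (n+1)) with hd
  have hdnn : ∀ n, 0 ≤ d n := fun n => dist_nonneg
  have hstep : ∀ n, d (n+1) ≤ β (d n) * d n := by
    intro n
    have := hT (s n) (s (n+1))
    simpa [hd, hsucc] using this
  have hble : ∀ t : ℝ, 0 ≤ t → β t * t ≤ t := by
    intro t ht
    nlinarith [(hβ.1 t ht).1, (hβ.1 t ht).2]
  have hmono : ∀ n, d (n+1) ≤ d n := fun n =>
    (hstep n).trans (hble _ (hdnn n))
  -- small displacements
  have hsmall : ∀ δ : ℝ, 0 < δ → ∃ N, d N < δ := by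
    intro δ hδ
    by_contra hc
    push_neg at hc
    obtain ⟨q, hq0, hq1, hq⟩ := geraghty_unif β hβ hδ
    have hgeo : ∀ n, d n ≤ q ^ n * d 0 := by
      intro n
      induction n with
      | zero => simp
      | succ n ih =>
        have h1 : d (n+1) ≤ q * d n := by
          have := hstep n
          have hβq : β (d n) ≤ q := hq _ (hc n)
          nlinarith [hdnn n]
        calc d (n+1) ≤ q * d n := h1
          _ ≤ q * (q ^ n * d 0) := by nlinarith
          _ = q ^ (n+1) * d 0 := by ring
    have hlim : Tendsto (fun n => q ^ n * d 0) atTop (𝓝 0) := by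
      have := (tendsto_pow_atTop_nhds_zero_of_lt_one hq0 hq1).mul_const (d 0)
      simpa using this
    have : ∀ᶠ n in atTop, q ^ n * d 0 < δ := by
      have := hlim (Metric.ball_mem_nhds 0 hδ)
      filter_upwards [this] with n hn
      simp only [Set.mem_preimage, Metric.mem_ball, Real.dist_eq, sub_zero] at hn
      exact lt_of_le_of_lt (le_abs_self _) hn
    obtain ⟨n, hn⟩ := this.exists
    exact absurd (hc n) (not_le.mpr (lt_of_le_of_lt (hgeo n) hn))
  -- Cauchy
  have hcauchy : CauchySeq s := by
    rw [Metric.cauchySeq_iff']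
    intro ε hε
    obtain ⟨q, hq0, hq1, hq⟩ := geraghty_unif β hβ (show (0:ℝ) < ε/4 by linarith)
    obtain ⟨N, hN⟩ := hsmall ((1-q)*ε/4) (by nlinarith)
    refine ⟨N, fun m hm => ?_⟩
    have key : ∀ m, N ≤ m → dist (s m) (s N) ≤ ε/2 := by
      intro m hm
      induction m, hm using Nat.le_induction with
      | base => simp; linarith
      | succ m hm ih =>
        set D := dist (s m) (s N) with hD
        have hDnn : 0 ≤ D := dist_nonneg
        have h1 : dist (s (m+1)) (s N) ≤ dist (s (m+1)) (s (N+1)) + dist (s (N+1)) (s N) :=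
          dist_triangle _ _ _
        have h2 : dist (s (m+1)) (s (N+1)) ≤ β D * D := by
          rw [hsucc m, hsucc N]
          exact hT (s m) (s N)
        have h3 : dist (s (N+1)) (s N) < (1-q)*ε/4 := by
          rw [dist_comm]; exact hN
        have h4 : β D * D ≤ ε/2 - (1-q)*ε/4 := by
          rcases le_or_gt (ε/4) D with hc | hc
          · have hβq : β D ≤ q := hq _ hc
            have : β D * D ≤ q * D := by nlinarith [(hβ.1 D hDnn).1]
            nlinarith
          · have := hble D hDnn
            nlinarith
        linarith
    exact lt_of_le_of_lt (key m hm) (by linarith)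
  obtain ⟨u, hu⟩ := cauchySeq_tendsto_of_complete hcauchy
  refine ⟨u, ?_, hu⟩
  have hcont : Continuous T := by
    have : LipschitzWith 1 T := by
      refine LipschitzWith.of_dist_le_mul (fun a b => ?_)
      simpa using (hT a b).trans (hble _ dist_nonneg)
    exact this.continuous
  have h1 : Tendsto (fun n => s (n+1)) atTop (𝓝 u) :=
    hu.comp (tendsto_add_atTop_nat 1)
  have h2 : Tendsto (fun n => T (s n)) atTop (𝓝 (T u)) :=
    (hcont.tendsto u).comp hu
  have h3 : Tendsto (fun n => T (s n)) atTop (𝓝 u) := by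
    simpa [hsucc] using h1
  exact tendsto_nhds_unique h2 h3

theorem geraghty_fixed_point {X : Type*} [MetricSpace X] [CompleteSpace X] [Nonempty X]
    (β : ℝ → ℝ) (hβ : IsGeraghty β) (T : X → X)
    (hT : ∀ x y : X, dist (T x) (T y) ≤ β (dist x y) * dist x y) :
    ∃ u : X, T u = u ∧ (∀ v : X, T v = v → v = u) ∧
      ∀ x : X, Tendsto (fun n => T^[n] x) atTop (𝓝 u) := by
  obtain ⟨u, hu, hconv⟩ := geraghty_orbit β hβ T hT (Classical.arbitrary X)
  have huniq : ∀ v : X, T v = v → v = u := by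
    intro v hv
    by_contra hne
    have hD : 0 < dist v u := dist_pos.mpr hne
    have := hT v u
    rw [hv, hu] at this
    nlinarith [(hβ.1 (dist v u) dist_nonneg).2, (hβ.1 (dist v u) dist_nonneg).1]
  refine ⟨u, hu, huniq, fun x => ?_⟩
  obtain ⟨w, hw, hwconv⟩ := geraghty_orbit β hβ T hT x
  rwa [huniq w hw] at hwconv
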